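/- (Theorem 3: outage probability for m_t+m_r > m.) Let m, m_t, m_r be natural numbers with m_t ≤ m, m_r ≤ m and m_t + m_r ≥ m, let ρ ≥ 0 and let r be a real number with r ≥ m_t+m_r−m. Then μ{H ∈ U(m) : |det(I_{m_t} + ρ·H₁₁ᴴ·H₁₁)| < (1+ρ)^r} = μ{H ∈ U(m) : |det(I_{m−m_r} + ρ·H₂₂·H₂₂ᴴ)| < (1+ρ)^(r−(m_t+m_r−m))}; that is, the outage probability at rate r·log(1+ρ) equals the outage probability of a Jacobi channel with m−m_r transmit and m−m_t receive modes at rate (r−(m_t+m_r−m))·log(1+ρ). -/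

import Mathlib

open Matrix MeasureTheory

noncomputable section

instance (m : ℕ) : MeasurableSpace (Matrix.unitaryGroup (Fin m) ℂ) := borel _
instance (m : ℕ) : BorelSpace (Matrix.unitaryGroup (Fin m) ℂ) := ⟨rfl⟩

def sub11 {m : ℕ} (mt mr : ℕ) (hmt : mt ≤ m) (hmr : mr ≤ m)
    (H : Matrix (Fin m) (Fin m) ℂ) : Matrix (Fin mr) (Fin mt) ℂ :=
  Matrix.of fun i j => H (Fin.castLE hmr i) (Fin.castLE hmt j)

def sub22 {m : ℕ} (mt mr : ℕ) (H : Matrix (Fin m) (Fin m) ℂ) :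
    Matrix (Fin (m - mr)) (Fin (m - mt)) ℂ :=
  Matrix.of fun i j => H ⟨mr + i, by omega⟩ ⟨mt + j, by omega⟩

def sub21 {m : ℕ} (mt mr : ℕ) (hmt : mt ≤ m) (H : Matrix (Fin m) (Fin m) ℂ) :
    Matrix (Fin (m - mr)) (Fin mt) ℂ :=
  Matrix.of fun i j => H ⟨mr + i, by omega⟩ (Fin.castLE hmt j)

lemma sum_split {α : Type*} [AddCommMonoid α] {m k : ℕ} (hk : k ≤ m) (f : Fin m → α) :
    ∑ i : Fin m, f i
      = (∑ i : Fin k, f (Fin.castLE hk i)) + ∑ i : Fin (m - k), f ⟨k + i, by omega⟩ := by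
  have e : k + (m - k) = m := by omega
  rw [← Fintype.sum_equiv (finCongr e) (fun i => f (finCongr e i)) f (fun _ => rfl),
    Fin.sum_univ_add]
  rfl

lemma block_col {m mt mr : ℕ} (hmt : mt ≤ m) (hmr : mr ≤ m)
    (U : Matrix.unitaryGroup (Fin m) ℂ) :
    (sub11 mt mr hmt hmr U)ᴴ * sub11 mt mr hmt hmr U
      + (sub21 mt mr hmt U)ᴴ * sub21 mt mr hmt U = 1 := by
  have h := Matrix.UnitaryGroup.star_mul_self U
  ext i j
  have := congrFun (congrFun h (Fin.castLE hmt i)) (Fin.castLE hmt j)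
  simp only [Matrix.mul_apply, Matrix.star_apply, Matrix.one_apply] at this
  simp only [Matrix.add_apply, Matrix.mul_apply, Matrix.conjTranspose_apply,
    sub11, sub21, Matrix.of_apply, Matrix.one_apply]
  rw [← sum_split hmr (f := fun k => star ((U : Matrix (Fin m) (Fin m) ℂ) k (Fin.castLE hmt i))
      * (U : Matrix (Fin m) (Fin m) ℂ) k (Fin.castLE hmt j)), this]
  simp [Fin.ext_iff]

lemma block_row {m mt mr : ℕ} (hmt : mt ≤ m) (hmr : mr ≤ m)
    (U : Matrix.unitaryGroup (Fin m) ℂ) :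
    sub21 mt mr hmt U * (sub21 mt mr hmt U)ᴴ
      + sub22 mt mr U * (sub22 mt mr U)ᴴ = 1 := by
  have h : (U : Matrix (Fin m) (Fin m) ℂ) * star (U : Matrix (Fin m) (Fin m) ℂ) = 1 :=
    Matrix.mem_unitaryGroup_iff.mp U.2
  ext i j
  have hi : mr + (i : ℕ) < m := by omega
  have hj : mr + (j : ℕ) < m := by omega
  have := congrFun (congrFun h ⟨mr + i, hi⟩) ⟨mr + j, hj⟩
  simp only [Matrix.mul_apply, Matrix.star_apply, Matrix.one_apply] at this
  simp only [Matrix.add_apply, Matrix.mul_apply, Matrix.conjTranspose_apply, Matrix.one_apply]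
  erw [Matrix.mul_apply]
  simp only [sub21, sub22, Matrix.of_apply, Matrix.conjTranspose_apply]
  rw [← sum_split hmt (f := fun k => (U : Matrix (Fin m) (Fin m) ℂ) ⟨mr + i, hi⟩ k
      * star ((U : Matrix (Fin m) (Fin m) ℂ) ⟨mr + j, hj⟩ k)), this]
  simp [Fin.ext_iff]

lemma det_key {m mt mr : ℕ} (hmt : mt ≤ m) (hmr : mr ≤ m) (hsum : m ≤ mt + mr)
    (ρ : ℝ) (hρ : 0 ≤ ρ) (U : Matrix.unitaryGroup (Fin m) ℂ) :
    (1 + (ρ : ℂ) • ((sub11 mt mr hmt hmr (U : Matrix (Fin m) (Fin m) ℂ))ᴴ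
        * sub11 mt mr hmt hmr (U : Matrix (Fin m) (Fin m) ℂ))).det
      = ((1 : ℂ) + ρ) ^ (mt + mr - m)
        * (1 + (ρ : ℂ) • (sub22 mt mr (U : Matrix (Fin m) (Fin m) ℂ)
            * (sub22 mt mr (U : Matrix (Fin m) (Fin m) ℂ))ᴴ)).det := by
  set A := sub11 mt mr hmt hmr (U : Matrix (Fin m) (Fin m) ℂ)
  set B := sub21 mt mr hmt (U : Matrix (Fin m) (Fin m) ℂ)
  set C := sub22 mt mr (U : Matrix (Fin m) (Fin m) ℂ)
  have h1 : ((1 : ℂ) + ρ) ≠ 0 := by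
    intro h
    have : (1 + ρ : ℝ) = 0 := by exact_mod_cast (by push_cast at h ⊢; exact h : ((1 + ρ : ℝ) : ℂ) = 0)
    linarith
  set s : ℂ := ρ / (1 + ρ) with hs
  have hA : Aᴴ * A = 1 - Bᴴ * B := by
    rw [eq_sub_iff_add_eq]; exact block_col hmt hmr U
  have hB : B * Bᴴ = 1 - C * Cᴴ := by
    rw [eq_sub_iff_add_eq]; exact block_row hmt hmr U
  have hc1 : ((1 : ℂ) + ρ) * (-s) = -ρ := by
    rw [hs]; field_simp
    try ring
  have hc2 : ((1 : ℂ) - s) * ρ = s := by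
    rw [hs]; field_simp
    try ring
  have e1 : (1 : Matrix (Fin mt) (Fin mt) ℂ) + (ρ : ℂ) • (Aᴴ * A)
      = ((1 : ℂ) + ρ) • (1 + (-s) • (Bᴴ * B)) := by
    rw [hA, smul_add, smul_smul, hc1, smul_sub, add_smul, one_smul, neg_smul]
    module
  have e3 : (1 : Matrix (Fin (m - mr)) (Fin (m - mr)) ℂ) + (-s) • (B * Bᴴ)
      = ((1 : ℂ) - s) • (1 + (ρ : ℂ) • (C * Cᴴ)) := by
    rw [hB, smul_add, smul_smul, hc2, smul_sub, sub_smul, one_smul, neg_smul]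
    module
  have e2 : ((1 : Matrix (Fin mt) (Fin mt) ℂ) + (-s) • (Bᴴ * B)).det
      = ((1 : Matrix (Fin (m - mr)) (Fin (m - mr)) ℂ) + (-s) • (B * Bᴴ)).det := by
    rw [← Matrix.smul_mul, Matrix.det_one_add_mul_comm, Matrix.mul_smul]
  rw [e1, Matrix.det_smul, e2, e3, Matrix.det_smul]
  have hsplit : mt = (mt + mr - m) + (m - mr) := by omega
  have hprod : ((1 : ℂ) + ρ) ^ (m - mr) * ((1 : ℂ) - s) ^ (m - mr) = 1 := by
    rw [← mul_pow]
    have : ((1 : ℂ) + ρ) * (1 - s) = 1 := by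
      rw [hs]; field_simp
      try ring
    rw [this, one_pow]
  simp only [Fintype.card_fin]
  have hpow : ((1 : ℂ) + ρ) ^ mt = ((1 : ℂ) + ρ) ^ (mt + mr - m) * ((1 : ℂ) + ρ) ^ (m - mr) := by
    rw [← pow_add]
    congr 1
  rw [hpow]
  linear_combination ((1 : ℂ) + ρ) ^ (mt + mr - m)
    * (1 + (ρ : ℂ) • (C * Cᴴ)).det * hprod

/-- **Theorem 3 (outage probability for `m_t + m_r > m`).** -/
theorem outage_probability_of_sum_gt (m mt mr : ℕ) (hmt : mt ≤ m) (hmr : mr ≤ m)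
    (hsum : m ≤ mt + mr) (ρ : ℝ) (hρ : 0 ≤ ρ) (r : ℝ) (hr : ((mt + mr - m : ℕ) : ℝ) ≤ r)
    (μ : Measure (Matrix.unitaryGroup (Fin m) ℂ)) [μ.IsHaarMeasure] [IsProbabilityMeasure μ] :
    μ {U : Matrix.unitaryGroup (Fin m) ℂ |
        ‖(1 + (ρ : ℂ) • ((sub11 mt mr hmt hmr (U : Matrix (Fin m) (Fin m) ℂ))ᴴ
          * sub11 mt mr hmt hmr (U : Matrix (Fin m) (Fin m) ℂ))).det‖ < (1 + ρ) ^ r}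
      = μ {U : Matrix.unitaryGroup (Fin m) ℂ |
          ‖(1 + (ρ : ℂ) • (sub22 mt mr (U : Matrix (Fin m) (Fin m) ℂ)
            * (sub22 mt mr (U : Matrix (Fin m) (Fin m) ℂ))ᴴ)).det‖
            < (1 + ρ) ^ (r - ((mt + mr - m : ℕ) : ℝ))} := by
  have h1ρ : (0 : ℝ) < 1 + ρ := by linarith
  congr 1
  ext U
  simp only [Set.mem_setOf_eq]
  rw [det_key hmt hmr hsum ρ hρ U, norm_mul, norm_pow]
  have habs : ‖(1 + (ρ : ℂ))‖ = 1 + ρ := by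
    rw [show (1 + (ρ : ℂ)) = ((1 + ρ : ℝ) : ℂ) by push_cast; ring,
      Complex.norm_real, Real.norm_eq_abs, abs_of_pos h1ρ]
  rw [habs]
  have hrw : (1 + ρ) ^ r
      = (1 + ρ) ^ (r - ((mt + mr - m : ℕ) : ℝ)) * (1 + ρ) ^ (mt + mr - m) := by
    rw [← Real.rpow_natCast (1 + ρ) (mt + mr - m), ← Real.rpow_add h1ρ]
    ring_nf
  rw [mul_comm, hrw]
  exact mul_lt_mul_iff_left₀ (pow_pos h1ρ _)
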